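/- The set of u-M-weakly compact operators from E to F is norm closed in the space of bounded operators: if Tₖ → T in operator norm and each Tₖ is u-M-weakly compact, then T is u-M-weakly compact. -/

import Mathlib

open Filter

/-- A sequence in a normed lattice is unbounded norm (un-) convergent to `0`. -/
def UnNullSeq {F : Type*} [NormedAddCommGroup F] [Lattice F] [HasSolidNorm F] [IsOrderedAddMonoid F] (y : ℕ → F) : Prop :=
  ∀ w : F, 0 ≤ w → Tendsto (fun n => ‖|y n| ⊓ w‖) atTop (nhds 0)

/-- `T` is unbounded M-weakly compact. -/
def UMWeaklyCompact {E F : Type*} [NormedAddCommGroup E] [Lattice E] [HasSolidNorm E] [IsOrderedAddMonoid E] [NormedSpace ℝ E]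
    [NormedAddCommGroup F] [Lattice F] [HasSolidNorm F] [IsOrderedAddMonoid F] [NormedSpace ℝ F] (T : E →L[ℝ] F) : Prop :=
  ∀ x : ℕ → E, (∃ C, ∀ n, ‖x n‖ ≤ C) → (∀ n m, n ≠ m → |x n| ⊓ |x m| = 0) →
    UnNullSeq (fun n => T (x n))

lemma key_ineq {F : Type*} [NormedAddCommGroup F] [Lattice F] [HasSolidNorm F] [IsOrderedAddMonoid F] (a b w : F) (hw : 0 ≤ w) :
    ‖|a| ⊓ w‖ ≤ ‖a - b‖ + ‖|b| ⊓ w‖ := by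
  have habs : |a| ≤ |a - b| + |b| := by
    have h := abs_add_le (a - b) b
    simpa using h
  have h1 : |a| ⊓ w ≤ |a - b| + |b| ⊓ w := by
    calc |a| ⊓ w ≤ (|a - b| + |b|) ⊓ (|a - b| + w) := by
          refine le_inf (le_trans inf_le_left habs)
            (le_trans inf_le_right (le_add_of_nonneg_left (abs_nonneg _)))
      _ = |a - b| + |b| ⊓ w := by
          rw [← add_inf]
  have h0 : (0 : F) ≤ |a| ⊓ w := le_inf (abs_nonneg _) hw
  have h2 : ‖|a| ⊓ w‖ ≤ ‖|a - b| + |b| ⊓ w‖ := by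
    apply HasSolidNorm.solid
    rw [abs_of_nonneg h0]
    refine le_trans h1 (le_abs_self _)
  refine le_trans h2 ((norm_add_le _ _).trans_eq ?_)
  rw [norm_abs_eq_norm]

/-- the u-M-weakly compact operators are norm closed: an operator
norm limit of u-M-weakly compact operators is u-M-weakly compact. -/
theorem uMWeaklyCompact_closed
    {E F : Type*} [NormedAddCommGroup E] [Lattice E] [HasSolidNorm E] [IsOrderedAddMonoid E] [NormedSpace ℝ E] [CompleteSpace E]
    [NormedAddCommGroup F] [Lattice F] [HasSolidNorm F] [IsOrderedAddMonoid F] [NormedSpace ℝ F] [CompleteSpace F]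
    (T : ℕ → E →L[ℝ] F) (S : E →L[ℝ] F)
    (hlim : Tendsto T atTop (nhds S))
    (hT : ∀ k, UMWeaklyCompact (T k)) :
    UMWeaklyCompact S := by
  rintro x ⟨C, hC⟩ hdisj w hw
  rw [Metric.tendsto_atTop]
  intro ε hε
  have hC0 : (0:ℝ) ≤ C := le_trans (norm_nonneg _) (hC 0)
  have hC1 : (0:ℝ) < C + 1 := by linarith
  set δ := ε / (2 * (C + 1)) with hδdef
  have hδ : 0 < δ := by positivity
  obtain ⟨k, hk⟩ := (Metric.tendsto_atTop.mp hlim δ hδ) |>.imp (fun k h => h k le_rfl)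
  have hk' : ‖S - T k‖ < δ := by
    rw [← dist_eq_norm, dist_comm]; exact hk
  obtain ⟨N, hN⟩ := Metric.tendsto_atTop.mp (hT k x ⟨C, hC⟩ hdisj w hw) (ε / 2) (by positivity)
  refine ⟨N, fun n hn => ?_⟩
  have h1 : ‖|(T k) (x n)| ⊓ w‖ < ε / 2 := by
    have := hN n hn
    rwa [Real.dist_eq, sub_zero, abs_of_nonneg (norm_nonneg _)] at this
  have h2 : ‖S (x n) - (T k) (x n)‖ < ε / 2 := by
    have : ‖S (x n) - (T k) (x n)‖ ≤ ‖S - T k‖ * ‖x n‖ := by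
      simpa using (S - T k).le_opNorm (x n)
    have hxn : ‖x n‖ ≤ C + 1 := le_trans (hC n) (by linarith)
    calc ‖S (x n) - (T k) (x n)‖ ≤ ‖S - T k‖ * (C + 1) := by
          refine le_trans this (mul_le_mul_of_nonneg_left hxn (norm_nonneg _))
      _ < δ * (C + 1) := by exact mul_lt_mul_of_pos_right hk' hC1
      _ = ε / 2 := by rw [hδdef, div_mul_eq_mul_div, mul_comm 2 (C + 1), ← div_div, mul_div_cancel_right₀ _ hC1.ne']
  have hkey := key_ineq (S (x n)) ((T k) (x n)) w hw
  rw [Real.dist_eq, sub_zero, abs_of_nonneg (norm_nonneg _)]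
  calc ‖|S (x n)| ⊓ w‖ ≤ ‖S (x n) - (T k) (x n)‖ + ‖|(T k) (x n)| ⊓ w‖ := hkey
    _ < ε / 2 + ε / 2 := add_lt_add h2 h1
    _ = ε := by ring
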